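/- arXiv:1306.1282 — 4 statements merged into one kernel-verified Lean document; each statement's English description precedes it below -/
import Mathlib

section
/- Let k be an infinite field, R = k[x,y], and V ⊆ R_j a k-vector subspace of the space of degree-j homogeneous forms with dim_k V = d. Then τ(V) := dim_k(R_1·V) − dim_k V satisfies 1 ≤ τ(V) ≤ min(d, j+1−d+1) whenever 1 ≤ d ≤ j+1 and V ≠ 0. Here R_1·V denotes the span of all products ℓf with ℓ ∈ R_1 and f ∈ V. -/
open MvPolynomial

private lemma fin2_decomp (m : Fin 2 →₀ ℕ) :
    m = Finsupp.single 0 (m 0) + Finsupp.single 1 (m 1) := by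
  ext a
  fin_cases a <;> simp [Finsupp.single_apply]

private lemma fin2_degree (m : Fin 2 →₀ ℕ) : Finsupp.degree m = m 0 + m 1 := by
  classical
  rw [Finsupp.degree_apply]
  rw [Finset.sum_subset (Finset.subset_univ m.support)
    (by intro x _ hx; simpa using Finsupp.notMem_support_iff.mp hx)]
  exact Fin.sum_univ_two m

private lemma homog_le_span (k : Type*) [Field k] (n : ℕ) :
    homogeneousSubmodule (Fin 2) k n ≤ Submodule.span k
      (Set.range (fun i : Fin (n+1) =>
        (monomial (Finsupp.single (0 : Fin 2) (i : ℕ) + Finsupp.single 1 (n - (i : ℕ)))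
          (1 : k)))) := by
  intro p hp
  rw [mem_homogeneousSubmodule] at hp
  rw [p.as_sum]
  refine Submodule.sum_mem _ fun m hm => ?_
  have hdeg : Finsupp.degree m = n := by
    rw [Finsupp.degree_eq_weight_one]
    exact hp (mem_support_iff.mp hm)
  have hsum : m 0 + m 1 = n := by rw [← fin2_degree m]; exact hdeg
  have h0 : m 0 < n + 1 := by omega
  have hmem : (monomial m (1 : k)) ∈ Set.range (fun i : Fin (n+1) =>
      (monomial (Finsupp.single (0 : Fin 2) (i : ℕ) + Finsupp.single 1 (n - (i : ℕ)))
        (1 : k))) := by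
    refine ⟨⟨m 0, h0⟩, ?_⟩
    have h1 : Finsupp.single (0 : Fin 2) (m 0) + Finsupp.single 1 (n - m 0) = m := by
      have h2 : n - m 0 = m 1 := by omega
      rw [h2]
      exact (fin2_decomp m).symm
    simp only [h1]
  have : monomial m (coeff m p) = (coeff m p) • monomial m (1 : k) := by
    rw [smul_monomial, smul_eq_mul, mul_one]
  rw [this]
  exact Submodule.smul_mem _ _ (Submodule.subset_span hmem)

private lemma fdHomog' (k : Type*) [Field k] (n : ℕ) :
    FiniteDimensional k (homogeneousSubmodule (Fin 2) k n) := by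
  haveI : FiniteDimensional k (Submodule.span k
      (Set.range (fun i : Fin (n+1) =>
        (monomial (Finsupp.single (0 : Fin 2) (i : ℕ) + Finsupp.single 1 (n - (i : ℕ)))
          (1 : k))))) :=
    FiniteDimensional.span_of_finite k (Set.finite_range _)
  exact Submodule.finiteDimensional_of_le (homog_le_span k n)

private lemma finrankHomog' (k : Type*) [Field k] (n : ℕ) :
    Module.finrank k (homogeneousSubmodule (Fin 2) k n) ≤ n + 1 := by
  haveI : FiniteDimensional k (Submodule.span k
      (Set.range (fun i : Fin (n+1) =>
        (monomial (Finsupp.single (0 : Fin 2) (i : ℕ) + Finsupp.single 1 (n - (i : ℕ)))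
          (1 : k))))) :=
    FiniteDimensional.span_of_finite k (Set.finite_range _)
  refine le_trans (Submodule.finrank_mono (homog_le_span k n)) ?_
  refine le_trans (finrank_range_le_card _) ?_
  simp


theorem tau_bounds (k : Type*) [Field k] [Infinite k] (j d : ℕ)
    (hd1 : 1 ≤ d) (hd2 : d ≤ j + 1)
    (V : Submodule k (MvPolynomial (Fin 2) k))
    (hV : V ≤ homogeneousSubmodule (Fin 2) k j)
    (hVd : Module.finrank k V = d) (hV0 : V ≠ ⊥) :
    1 ≤ Module.finrank k
        (Submodule.span k {p : MvPolynomial (Fin 2) k |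
          ∃ ℓ ∈ homogeneousSubmodule (Fin 2) k 1, ∃ f ∈ V, p = ℓ * f}) - d ∧
    Module.finrank k
        (Submodule.span k {p : MvPolynomial (Fin 2) k |
          ∃ ℓ ∈ homogeneousSubmodule (Fin 2) k 1, ∃ f ∈ V, p = ℓ * f}) - d
      ≤ min d (j + 2 - d) := by
  classical
  set S : Set (MvPolynomial (Fin 2) k) := {p : MvPolynomial (Fin 2) k |
    ∃ ℓ ∈ homogeneousSubmodule (Fin 2) k 1, ∃ f ∈ V, p = ℓ * f} with hS
  set W : Submodule k (MvPolynomial (Fin 2) k) := Submodule.span k S with hWdef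
  -- finite dimensionality of homogeneous components
  have fdHomog := fdHomog' k
  have finrankHomog := finrankHomog' k
  haveI : FiniteDimensional k (homogeneousSubmodule (Fin 2) k j) := fdHomog j
  haveI : FiniteDimensional k (homogeneousSubmodule (Fin 2) k (j+1)) := fdHomog (j+1)
  haveI hVfd : FiniteDimensional k V := Submodule.finiteDimensional_of_le hV
  -- multiplication maps
  set mulX : MvPolynomial (Fin 2) k →ₗ[k] MvPolynomial (Fin 2) k :=
    LinearMap.mulLeft k (X 0) with hmulX
  set mulY : MvPolynomial (Fin 2) k →ₗ[k] MvPolynomial (Fin 2) k :=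
    LinearMap.mulLeft k (X 1) with hmulY
  set A : Submodule k (MvPolynomial (Fin 2) k) := Submodule.map mulX V with hA
  set B : Submodule k (MvPolynomial (Fin 2) k) := Submodule.map mulY V with hB
  have hXf_mem : ∀ (s : Fin 2), ∀ f ∈ V, (X s : MvPolynomial (Fin 2) k) * f ∈ S := by
    intro s f hf
    exact ⟨X s, (mem_homogeneousSubmodule _ _).mpr (isHomogeneous_X k s), f, hf, rfl⟩
  have hA_le_W : A ≤ W := by
    rintro _ ⟨f, hf, rfl⟩
    exact Submodule.subset_span (hXf_mem 0 f hf)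
  have hB_le_W : B ≤ W := by
    rintro _ ⟨f, hf, rfl⟩
    exact Submodule.subset_span (hXf_mem 1 f hf)
  -- every homogeneous linear form is a combination of X 1 and X 0
  have homog1 : ∀ ℓ : MvPolynomial (Fin 2) k, ℓ ∈ homogeneousSubmodule (Fin 2) k 1 →
      ∃ a b : k, a • (X 1 : MvPolynomial (Fin 2) k) + b • (X 0 : MvPolynomial (Fin 2) k) = ℓ := by
    intro ℓ hℓ
    have h1 := homog_le_span k 1 hℓ
    have himg : (Set.range (fun i : Fin 2 =>
        (monomial (Finsupp.single (0 : Fin 2) (i : ℕ) + Finsupp.single 1 (1 - (i : ℕ)))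
          (1 : k)))) ⊆
        ({(X 1 : MvPolynomial (Fin 2) k), (X 0 : MvPolynomial (Fin 2) k)} :
          Set (MvPolynomial (Fin 2) k)) := by
      rintro q ⟨i, rfl⟩
      fin_cases i
      · left
        simp only [Fin.val_zero, Finsupp.single_zero, zero_add, Nat.sub_zero]
        rw [← pow_one (X (1 : Fin 2) : MvPolynomial (Fin 2) k), X_pow_eq_monomial]
      · right
        simp only [Fin.val_one, Nat.sub_self, Finsupp.single_zero, add_zero,
          Set.mem_singleton_iff]
        rw [← pow_one (X (0 : Fin 2) : MvPolynomial (Fin 2) k), X_pow_eq_monomial]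
    have := Submodule.span_mono himg h1
    rwa [Submodule.mem_span_pair] at this
  -- W is contained in A ⊔ B
  have hW_le : W ≤ A ⊔ B := by
    rw [hWdef, Submodule.span_le]
    rintro p ⟨ℓ, hℓ, f, hf, rfl⟩
    obtain ⟨a, b, hab⟩ := homog1 ℓ hℓ
    have : ℓ * f = a • ((X 1 : MvPolynomial (Fin 2) k) * f)
        + b • ((X 0 : MvPolynomial (Fin 2) k) * f) := by
      rw [← hab, add_mul, smul_mul_assoc, smul_mul_assoc]
    rw [SetLike.mem_coe, this]
    refine Submodule.add_mem _ ?_ ?_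
    · exact Submodule.smul_mem _ _ (Submodule.mem_sup_right ⟨f, hf, rfl⟩)
    · exact Submodule.smul_mem _ _ (Submodule.mem_sup_left ⟨f, hf, rfl⟩)
  -- W is contained in the degree j+1 homogeneous component
  have hW_homog : W ≤ homogeneousSubmodule (Fin 2) k (j + 1) := by
    rw [hWdef, Submodule.span_le]
    rintro p ⟨ℓ, hℓ, f, hf, rfl⟩
    rw [SetLike.mem_coe, mem_homogeneousSubmodule]
    have h1 : ℓ.IsHomogeneous 1 := (mem_homogeneousSubmodule _ _).mp hℓ
    have h2 : f.IsHomogeneous j := (mem_homogeneousSubmodule _ _).mp (hV hf)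
    have := h1.mul h2
    rwa [add_comm] at this
  haveI hWfd : FiniteDimensional k W := Submodule.finiteDimensional_of_le hW_homog
  -- injectivity of multiplication by a variable
  have hXinj : ∀ s : Fin 2,
      Function.Injective ⇑(LinearMap.mulLeft k (X s : MvPolynomial (Fin 2) k)) := by
    intro s p q hpq
    simp only [LinearMap.mulLeft_apply] at hpq
    exact mul_left_cancel₀ (X_ne_zero s) hpq
  have hArank : Module.finrank k A = d := by
    rw [← hVd]
    exact (LinearEquiv.finrank_eq (Submodule.equivMapOfInjective mulX (hXinj 0) V)).symm
  -- upper bounds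
  have hupper1 : Module.finrank k W ≤ j + 2 := by
    refine le_trans (Submodule.finrank_mono hW_homog) ?_
    exact finrankHomog (j + 1)
  have hupper2 : Module.finrank k W ≤ d + d := by
    refine le_trans (Submodule.finrank_mono hW_le) ?_
    refine le_trans (Submodule.finrank_add_le_finrank_add_finrank A B) ?_
    have h1 : Module.finrank k B ≤ d := by
      rw [← hVd]; exact Submodule.finrank_map_le mulY V
    omega
  -- lower bound
  have hlower : d + 1 ≤ Module.finrank k W := by
    by_contra hcon
    push_neg at hcon
    have hWA : A = W := by
      refine Submodule.eq_of_le_of_finrank_le hA_le_W ?_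
      rw [hArank]; omega
    obtain ⟨f, hfV, hf0⟩ := Submodule.ne_bot_iff V |>.mp hV0
    have key : ∀ g ∈ V, g ≠ 0 → ∃ h ∈ V, h ≠ 0 ∧
        (X 1 : MvPolynomial (Fin 2) k) * g = (X 0 : MvPolynomial (Fin 2) k) * h := by
      intro g hg hg0
      have : (X 1 : MvPolynomial (Fin 2) k) * g ∈ A := by
        rw [hWA]
        exact Submodule.subset_span (hXf_mem 1 g hg)
      obtain ⟨h, hh, hh'⟩ := this
      have hh'' : (X 1 : MvPolynomial (Fin 2) k) * g = (X 0 : MvPolynomial (Fin 2) k) * h := by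
        rw [← hh']; rfl
      refine ⟨h, hh, ?_, hh''⟩
      intro h0
      rw [h0, mul_zero] at hh''
      exact mul_ne_zero (X_ne_zero 1) hg0 hh''
    have ladder : ∀ n : ℕ, ∃ g ∈ V, g ≠ 0 ∧
        (X 1 : MvPolynomial (Fin 2) k) ^ n * f = (X 0 : MvPolynomial (Fin 2) k) ^ n * g := by
      intro n
      induction n with
      | zero => exact ⟨f, hfV, hf0, by simp⟩
      | succ n ih =>
        obtain ⟨g, hg, hg0, heq⟩ := ih
        obtain ⟨h, hh, hh0, hyx⟩ := key g hg hg0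
        refine ⟨h, hh, hh0, ?_⟩
        calc (X 1 : MvPolynomial (Fin 2) k) ^ (n + 1) * f
            = (X 1 : MvPolynomial (Fin 2) k) * ((X 1 : MvPolynomial (Fin 2) k) ^ n * f) := by
              ring
          _ = (X 1 : MvPolynomial (Fin 2) k) * ((X 0 : MvPolynomial (Fin 2) k) ^ n * g) := by
              rw [heq]
          _ = (X 0 : MvPolynomial (Fin 2) k) ^ n * ((X 1 : MvPolynomial (Fin 2) k) * g) := by
              ring
          _ = (X 0 : MvPolynomial (Fin 2) k) ^ n * ((X 0 : MvPolynomial (Fin 2) k) * h) := by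
              rw [hyx]
          _ = (X 0 : MvPolynomial (Fin 2) k) ^ (n + 1) * h := by ring
    obtain ⟨g, hg, hg0, heq⟩ := ladder (j + 1)
    obtain ⟨m, hm⟩ := (support_nonempty).mpr hf0
    have hcm : coeff m f ≠ 0 := mem_support_iff.mp hm
    have hdegm : Finsupp.degree m = j := by
      rw [Finsupp.degree_eq_weight_one]
      exact ((mem_homogeneousSubmodule _ _).mp (hV hfV)) hcm
    have hm0 : m 0 ≤ j := hdegm ▸ Finsupp.le_degree 0 m
    have h1 : coeff (Finsupp.single (1 : Fin 2) (j+1) + m)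
        ((X 1 : MvPolynomial (Fin 2) k) ^ (j+1) * f) = coeff m f := by
      rw [X_pow_eq_monomial, coeff_monomial_mul, one_mul]
    have h2 : coeff (Finsupp.single (1 : Fin 2) (j+1) + m)
        ((X 0 : MvPolynomial (Fin 2) k) ^ (j+1) * g) = 0 := by
      rw [X_pow_eq_monomial, coeff_monomial_mul']
      rw [if_neg]
      intro hle
      have h3 := hle 0
      simp only [Finsupp.single_apply, Finsupp.add_apply] at h3
      rw [if_pos trivial, if_neg (by decide : ¬((1 : Fin 2) = 0))] at h3
      omega
    rw [heq, h2] at h1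
    exact hcm h1.symm
  have hgoal : Module.finrank k
      (Submodule.span k {p : MvPolynomial (Fin 2) k |
        ∃ ℓ ∈ homogeneousSubmodule (Fin 2) k 1, ∃ f ∈ V, p = ℓ * f}) = Module.finrank k W := rfl
  rw [hgoal]
  refine ⟨by omega, le_min (by omega) (by omega)⟩
end

section
/- Let R = k[x,y] over a field k and V ⊆ R_j a subspace of dimension d ≥ 1. If τ(V) = 1, i.e. dim_k(R_1·V) = d + 1, then there exists f ∈ R_{j-d+1} such that V = f · R_{d-1}, the space of all products of f with forms of degree d−1. -/
open MvPolynomial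

namespace TauAux

variable {k : Type*} [Field k]

lemma fdeg_add {σ : Type*} (a b : σ →₀ ℕ) : (a + b).degree = a.degree + b.degree := by
  simp [Finsupp.degree_eq_weight_one, map_add]

lemma fdeg_single {σ : Type*} (i : σ) (n : ℕ) : (Finsupp.single i n).degree = n := by
  simp [Finsupp.degree_eq_weight_one, Finsupp.weight, Finsupp.linearCombination_single]

lemma homog_degree_eq {p : MvPolynomial (Fin 2) k} {n : ℕ} (h : p.IsHomogeneous n)
    {d : Fin 2 →₀ ℕ} (hd : coeff d p ≠ 0) : d.degree = n := by
  rw [Finsupp.degree_eq_weight_one]; exact h hd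

lemma homog_of_X_mul {i : Fin 2} {c : MvPolynomial (Fin 2) k} {n : ℕ}
    (h : ((X i : MvPolynomial (Fin 2) k) * c).IsHomogeneous (n+1)) : c.IsHomogeneous n := by
  intro d hd
  have h2 : coeff (Finsupp.single i 1 + d) ((X i : MvPolynomial (Fin 2) k) * c) ≠ 0 := by
    rwa [coeff_X_mul]
  have := h h2
  rw [Pi.one_def, ← Finsupp.degree_eq_weight_one] at this ⊢
  rw [fdeg_add, fdeg_single] at this
  omega

lemma not_homog_zero {i : Fin 2} {c : MvPolynomial (Fin 2) k} (hc : c ≠ 0)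
    (h : ((X i : MvPolynomial (Fin 2) k) * c).IsHomogeneous 0) : False := by
  have hne : (X i : MvPolynomial (Fin 2) k) * c ≠ 0 := mul_ne_zero (X_ne_zero i) hc
  obtain ⟨d, hd⟩ := support_nonempty.mpr hne
  have hd' : coeff d ((X i : MvPolynomial (Fin 2) k) * c) ≠ 0 := mem_support_iff.mp hd
  have h0 := h hd'
  rw [Pi.one_def, ← Finsupp.degree_eq_weight_one] at h0
  rw [Finsupp.degree_eq_zero_iff] at h0
  subst h0
  apply hd'
  rw [← constantCoeff_eq]
  simp

lemma homog_of_X_mul' {i : Fin 2} {c : MvPolynomial (Fin 2) k} {n : ℕ} (hc : c ≠ 0)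
    (h : ((X i : MvPolynomial (Fin 2) k) * c).IsHomogeneous n) :
    c.IsHomogeneous (n - 1) ∧ 1 ≤ n := by
  cases n with
  | zero => exact absurd h (fun h => not_homog_zero hc h)
  | succ m => exact ⟨by simpa using homog_of_X_mul h, by omega⟩

lemma le_of_homog_pow_mul {i : Fin 2} {c : MvPolynomial (Fin 2) k} (hc : c ≠ 0) :
    ∀ {n m : ℕ}, ((X i : MvPolynomial (Fin 2) k) ^ n * c).IsHomogeneous m → n ≤ m := by
  intro n
  induction n with
  | zero => omega
  | succ p ih =>
    intro m h
    rw [pow_succ, mul_comm ((X i : MvPolynomial (Fin 2) k) ^ p) (X i), mul_assoc] at h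
    have hne : (X i : MvPolynomial (Fin 2) k) ^ p * c ≠ 0 :=
      mul_ne_zero (pow_ne_zero _ (X_ne_zero i)) hc
    obtain ⟨h1, h2⟩ := homog_of_X_mul' hne h
    have := ih h1
    omega

lemma ringEquiv_prime {R S : Type*} [CommRing R] [CommRing S] (e : R ≃+* S) {p : R}
    (h : Prime (e p)) : Prime p := by
  rw [← MulEquiv.prime_iff e.toMulEquiv]
  simpa [RingEquiv.coe_toMulEquiv] using h

lemma prime_X0 : Prime (X 0 : MvPolynomial (Fin 2) k) := by
  apply ringEquiv_prime (finSuccEquiv k 1).toRingEquiv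
  have : (finSuccEquiv k 1).toRingEquiv (X 0) = Polynomial.X := finSuccEquiv_X_zero
  rw [this]
  exact Polynomial.prime_X

lemma prime_Xi (i : Fin 2) : Prime (X i : MvPolynomial (Fin 2) k) := by
  have h2 : i = 0 ∨ i = 1 := by omega
  rcases h2 with rfl | rfl
  · exact prime_X0
  · apply ringEquiv_prime (renameEquiv k (Equiv.swap (0 : Fin 2) 1)).toRingEquiv
    have : (renameEquiv k (Equiv.swap (0 : Fin 2) 1)).toRingEquiv (X 1) = X 0 := by
      simp
    rw [this]
    exact prime_X0

lemma factor_eq {a b : MvPolynomial (Fin 2) k} (h : X 0 * a = X 1 * b) :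
    ∃ c, a = X 1 * c ∧ b = X 0 * c := by
  have h1 : (X 1 : MvPolynomial (Fin 2) k) ∣ X 0 * a := ⟨b, h⟩
  rcases (prime_Xi 1).2.2 _ _ h1 with h2 | h2
  · have := (X_dvd_X (R := k)).mp h2; omega
  · obtain ⟨c, rfl⟩ := h2
    refine ⟨c, rfl, ?_⟩
    have h3 : (X 1 : MvPolynomial (Fin 2) k) * (X 0 * c) = X 1 * b := by
      rw [← h]; ring
    exact (mul_left_cancel₀ (X_ne_zero 1) h3).symm

lemma homog_zero_eq_C {g : MvPolynomial (Fin 2) k} (h : g.IsHomogeneous 0) :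
    g = C (coeff 0 g) := by
  ext d
  rcases eq_or_ne d 0 with rfl | hd
  · simp
  · rw [coeff_C, if_neg (by exact fun hc => hd hc.symm)]
    by_contra hcc
    have hdeg : d.degree = 0 := by
      rw [Finsupp.degree_eq_weight_one]; exact h hcc
    exact hd (Finsupp.degree_eq_zero_iff d |>.mp hdeg)

lemma fdeg_fin2 (d : Fin 2 →₀ ℕ) : d.degree = d 0 + d 1 := by
  have h : d.degree = ∑ i : Fin 2, d i := by
    refine Finset.sum_subset (Finset.subset_univ _) ?_
    intro x _ hx
    simpa using Finsupp.notMem_support_iff.mp hx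
  rw [h, Fin.sum_univ_two]

lemma deg_one_cases (d : Fin 2 →₀ ℕ) (h : d.degree = 1) :
    d = Finsupp.single 0 1 ∨ d = Finsupp.single 1 1 := by
  rw [fdeg_fin2] at h
  rcases Nat.eq_zero_or_pos (d 0) with h0 | h0
  · right
    ext i
    have : i = 0 ∨ i = 1 := by omega
    rcases this with rfl | rfl <;> simp [Finsupp.single_apply] <;> omega
  · left
    ext i
    have : i = 0 ∨ i = 1 := by omega
    rcases this with rfl | rfl <;> simp [Finsupp.single_apply] <;> omega

lemma X_mul_monomial' (i : Fin 2) (s : Fin 2 →₀ ℕ) (c : k) :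
    (X i : MvPolynomial (Fin 2) k) * monomial s c = monomial (Finsupp.single i 1 + s) c := by
  rw [X, monomial_mul, one_mul]

lemma split_homog {m : ℕ} {p : MvPolynomial (Fin 2) k} (h : p.IsHomogeneous (m + 1)) :
    ∃ a b : MvPolynomial (Fin 2) k, a.IsHomogeneous m ∧ b.IsHomogeneous m ∧
      p = X 0 * a + X 1 * b := by
  have key : ∀ d ∈ p.support, ∃ a b : MvPolynomial (Fin 2) k,
      a.IsHomogeneous m ∧ b.IsHomogeneous m ∧
      (monomial d (coeff d p) : MvPolynomial (Fin 2) k) = X 0 * a + X 1 * b := by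
    intro d hd
    have hdeg : d.degree = m + 1 := homog_degree_eq h (mem_support_iff.mp hd)
    have hpos : 1 ≤ d 0 ∨ 1 ≤ d 1 := by
      rw [fdeg_fin2] at hdeg; omega
    rcases hpos with hp0 | hp0
    · have hle : Finsupp.single (0 : Fin 2) 1 ≤ d := Finsupp.single_le_iff.mpr hp0
      have hsum : Finsupp.single (0 : Fin 2) 1 + (d - Finsupp.single 0 1) = d :=
        add_tsub_cancel_of_le hle
      refine ⟨monomial (d - Finsupp.single 0 1) (coeff d p), 0, ?_, isHomogeneous_zero _ _ _, ?_⟩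
      · apply isHomogeneous_monomial
        have := fdeg_add (Finsupp.single (0 : Fin 2) 1) (d - Finsupp.single 0 1)
        rw [hsum, hdeg, fdeg_single] at this
        omega
      · rw [X_mul_monomial', hsum, mul_zero, add_zero]
    · have hle : Finsupp.single (1 : Fin 2) 1 ≤ d := Finsupp.single_le_iff.mpr hp0
      have hsum : Finsupp.single (1 : Fin 2) 1 + (d - Finsupp.single 1 1) = d :=
        add_tsub_cancel_of_le hle
      refine ⟨0, monomial (d - Finsupp.single 1 1) (coeff d p), isHomogeneous_zero _ _ _, ?_, ?_⟩
      · apply isHomogeneous_monomial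
        have := fdeg_add (Finsupp.single (1 : Fin 2) 1) (d - Finsupp.single 1 1)
        rw [hsum, hdeg, fdeg_single] at this
        omega
      · rw [X_mul_monomial', hsum, mul_zero, zero_add]
  choose A B hA hB hEq using key
  refine ⟨∑ d ∈ p.support.attach, A d.1 d.2, ∑ d ∈ p.support.attach, B d.1 d.2, ?_, ?_, ?_⟩
  · exact IsHomogeneous.sum _ _ _ (fun d _ => hA d.1 d.2)
  · exact IsHomogeneous.sum _ _ _ (fun d _ => hB d.1 d.2)
  · conv_lhs => rw [← support_sum_monomial_coeff p]
    rw [← Finset.sum_attach p.support (fun d => (monomial d (coeff d p) : MvPolynomial (Fin 2) k))]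
    rw [Finset.mul_sum, Finset.mul_sum, ← Finset.sum_add_distrib]
    exact Finset.sum_congr rfl (fun d _ => hEq d.1 d.2)

noncomputable abbrev mulL (f : MvPolynomial (Fin 2) k) :
    MvPolynomial (Fin 2) k →ₗ[k] MvPolynomial (Fin 2) k := LinearMap.mulLeft k f

lemma mulL_apply (f p : MvPolynomial (Fin 2) k) : mulL f p = f * p := rfl

lemma mulL_inj {f : MvPolynomial (Fin 2) k} (hf : f ≠ 0) : Function.Injective (mulL f) :=
  fun _ _ h => mul_left_cancel₀ hf h

lemma finrank_map_mulL {f : MvPolynomial (Fin 2) k} (hf : f ≠ 0)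
    (V : Submodule k (MvPolynomial (Fin 2) k)) :
    Module.finrank k (V.map (mulL f)) = Module.finrank k V :=
  (LinearEquiv.finrank_eq (Submodule.equivMapOfInjective _ (mulL_inj hf) V)).symm

lemma span_S_eq (V : Submodule k (MvPolynomial (Fin 2) k)) :
    Submodule.span k {p : MvPolynomial (Fin 2) k |
        ∃ ℓ ∈ homogeneousSubmodule (Fin 2) k 1, ∃ g ∈ V, p = ℓ * g} =
      V.map (mulL (X 0)) ⊔ V.map (mulL (X 1)) := by
  apply le_antisymm
  · rw [Submodule.span_le]
    rintro p ⟨ℓ, hℓ, g, hg, rfl⟩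
    rw [mem_homogeneousSubmodule] at hℓ
    show ℓ * g ∈ _
    rw [← support_sum_monomial_coeff ℓ, Finset.sum_mul]
    apply Submodule.sum_mem
    intro d hd
    have hdeg := homog_degree_eq hℓ (mem_support_iff.mp hd)
    have hmono : ∀ i : Fin 2,
        (monomial (Finsupp.single i 1) (coeff d ℓ) : MvPolynomial (Fin 2) k) * g
        = coeff d ℓ • ((X i) * g) := by
      intro i
      rw [← C_mul_X_pow_eq_monomial (n := 1), pow_one, smul_eq_C_mul]
      ring
    rcases deg_one_cases d hdeg with rfl | rfl
    · rw [hmono 0]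
      exact Submodule.smul_mem _ _ (Submodule.mem_sup_left (Submodule.mem_map_of_mem hg))
    · rw [hmono 1]
      exact Submodule.smul_mem _ _ (Submodule.mem_sup_right (Submodule.mem_map_of_mem hg))
  · apply sup_le <;> rw [Submodule.map_le_iff_le_comap] <;> intro g hg <;>
      apply Submodule.subset_span
    · exact ⟨X 0, (mem_homogeneousSubmodule _ _).mpr (isHomogeneous_X _ _), g, hg, rfl⟩
    · exact ⟨X 1, (mem_homogeneousSubmodule _ _).mpr (isHomogeneous_X _ _), g, hg, rfl⟩

lemma tau_lt {j : ℕ} (V : Submodule k (MvPolynomial (Fin 2) k))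
    (hV : V ≤ homogeneousSubmodule (Fin 2) k j) (hne : V ≠ ⊥) [FiniteDimensional k V] :
    Module.finrank k V <
      Module.finrank k (V.map (mulL (X 0)) ⊔ V.map (mulL (X 1)) :
        Submodule k (MvPolynomial (Fin 2) k)) := by
  have hrk : Module.finrank k (V.map (mulL (X 0))) = Module.finrank k V :=
    finrank_map_mulL (X_ne_zero 0) V
  have hle : V.map (mulL (X 0)) ≤ V.map (mulL (X 0)) ⊔ V.map (mulL (X 1)) := le_sup_left
  have hneq : V.map (mulL (X 0)) ≠ V.map (mulL (X 0)) ⊔ V.map (mulL (X 1)) := by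
    intro hEq
    have hyx : V.map (mulL (X 1)) ≤ V.map (mulL (X 0)) := by
      rw [hEq]; exact le_sup_right
    have claim : ∀ n : ℕ, ∀ g ∈ V, ∃ h ∈ V,
        (X 1 : MvPolynomial (Fin 2) k) ^ n * g = (X 0) ^ n * h := by
      intro n
      induction n with
      | zero => intro g hg; exact ⟨g, hg, by simp⟩
      | succ p ih =>
        intro g hg
        obtain ⟨h₁, hh₁, hEq1⟩ := hyx (Submodule.mem_map_of_mem (f := mulL (X 1)) hg)
        obtain ⟨h₂, hh₂, hEq2⟩ := ih h₁ hh₁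
        refine ⟨h₂, hh₂, ?_⟩
        have hEq1' : (X 0 : MvPolynomial (Fin 2) k) * h₁ = X 1 * g := hEq1
        calc (X 1 : MvPolynomial (Fin 2) k)^(p+1) * g = X 1^p * (X 1 * g) := by ring
          _ = X 1^p * (X 0 * h₁) := by rw [hEq1']
          _ = X 0 * (X 1^p * h₁) := by ring
          _ = X 0 * (X 0^p * h₂) := by rw [hEq2]
          _ = X 0^(p+1) * h₂ := by ring
    obtain ⟨g₀, hg₀, hg₀ne⟩ := (Submodule.ne_bot_iff V).mp hne
    obtain ⟨h, _, hEq3⟩ := claim (j+1) g₀ hg₀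
    have hnd : ¬ (X 0 : MvPolynomial (Fin 2) k) ∣ (X 1) ^ (j+1) := by
      intro hdv
      have h01 := (X_dvd_X (R := k)).mp ((prime_Xi 0).dvd_of_dvd_pow hdv)
      omega
    have hdvd2 : (X 0 : MvPolynomial (Fin 2) k) ^ (j+1) ∣ g₀ :=
      (prime_Xi 0).pow_dvd_of_dvd_mul_left _ hnd ⟨h, hEq3⟩
    obtain ⟨c, rfl⟩ := hdvd2
    have hc : c ≠ 0 := by rintro rfl; simp at hg₀ne
    have hhom : ((X 0 : MvPolynomial (Fin 2) k) ^ (j+1) * c).IsHomogeneous j := hV hg₀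
    have := le_of_homog_pow_mul hc hhom
    omega
  have := Submodule.finrank_lt_finrank_of_lt (lt_of_le_of_ne hle hneq)
  omega

set_option maxHeartbeats 1000000 in
theorem aux (d : ℕ) : ∀ (j : ℕ) (V : Submodule k (MvPolynomial (Fin 2) k)),
    1 ≤ d →
    V ≤ homogeneousSubmodule (Fin 2) k j →
    Module.finrank k V = d →
    Module.finrank k
      (Submodule.span k {p : MvPolynomial (Fin 2) k |
        ∃ ℓ ∈ homogeneousSubmodule (Fin 2) k 1, ∃ g ∈ V, p = ℓ * g}) = d + 1 →
    ∃ f ∈ homogeneousSubmodule (Fin 2) k (j + 1 - d),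
      (V : Set (MvPolynomial (Fin 2) k)) =
        {p | ∃ g ∈ homogeneousSubmodule (Fin 2) k (d - 1), p = f * g} := by
  induction d with
  | zero => intro j V h1; omega
  | succ n ih =>
    intro j V _ hV hVd htau
    haveI : FiniteDimensional k V := FiniteDimensional.of_finrank_pos (by omega)
    rcases Nat.eq_zero_or_pos n with rfl | hn
    · -- base case d = 1
      have hne : V ≠ ⊥ := by
        intro h; rw [h] at hVd; simp at hVd
      obtain ⟨f, hfV, hf0⟩ := (Submodule.ne_bot_iff V).mp hne
      have hsp : Submodule.span k {f} ≤ V := by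
        rw [Submodule.span_singleton_le_iff_mem]; exact hfV
      have hVeq : Submodule.span k {f} = V := by
        apply Submodule.eq_of_le_of_finrank_le hsp
        rw [hVd, finrank_span_singleton hf0]
      refine ⟨f, by simpa using hV hfV, ?_⟩
      ext p
      simp only [SetLike.mem_coe, Set.mem_setOf_eq]
      constructor
      · intro hp
        rw [← hVeq] at hp
        obtain ⟨c, rfl⟩ := Submodule.mem_span_singleton.mp hp
        exact ⟨C c, (mem_homogeneousSubmodule _ _).mpr (isHomogeneous_C _ _), by
          rw [smul_eq_C_mul]; ring⟩
      · rintro ⟨g, hg, rfl⟩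
        rw [mem_homogeneousSubmodule] at hg
        have hg0 : g.IsHomogeneous 0 := by simpa using hg
        rw [homog_zero_eq_C hg0]
        have : f * C (coeff 0 g) = coeff 0 g • f := by
          rw [smul_eq_C_mul]; ring
        rw [this]
        exact Submodule.smul_mem _ _ hfV
    · -- inductive step, d = n + 1 with n ≥ 1
      rw [span_S_eq] at htau
      have hrkx : Module.finrank k (V.map (mulL (X 0))) = n + 1 := by
        rw [finrank_map_mulL (X_ne_zero 0) V, hVd]
      have hrky : Module.finrank k (V.map (mulL (X 1))) = n + 1 := by
        rw [finrank_map_mulL (X_ne_zero 1) V, hVd]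
      have hinf : Module.finrank k
          (V.map (mulL (X 0)) ⊓ V.map (mulL (X 1)) :
            Submodule k (MvPolynomial (Fin 2) k)) = n := by
        have := Submodule.finrank_sup_add_finrank_inf_eq (V.map (mulL (X 0)))
          (V.map (mulL (X 1)))
        rw [htau, hrkx, hrky] at this
        omega
      set W : Submodule k (MvPolynomial (Fin 2) k) :=
        homogeneousSubmodule (Fin 2) k (j-1) ⊓ V.comap (mulL (X 0)) ⊓ V.comap (mulL (X 1))
        with hWdef
      have hxy0 : (X 0 : MvPolynomial (Fin 2) k) * X 1 ≠ 0 :=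
        mul_ne_zero (X_ne_zero 0) (X_ne_zero 1)
      have hmapW : W.map (mulL (X 0 * X 1)) = V.map (mulL (X 0)) ⊓ V.map (mulL (X 1)) := by
        apply le_antisymm
        · rintro p ⟨w, ⟨⟨_, hw2⟩, hw3⟩, rfl⟩
          constructor
          · exact ⟨X 1 * w, hw3, by simp only [mulL_apply]; ring⟩
          · exact ⟨X 0 * w, hw2, by simp only [mulL_apply]; ring⟩
        · rintro p ⟨⟨a, ha, hpa⟩, ⟨b, hb, hpb⟩⟩
          have hpa' : (X 0 : MvPolynomial (Fin 2) k) * a = p := hpa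
          have hpb' : (X 1 : MvPolynomial (Fin 2) k) * b = p := hpb
          have heq : (X 0 : MvPolynomial (Fin 2) k) * a = X 1 * b := by rw [hpa', hpb']
          obtain ⟨c, hca, hcb⟩ := factor_eq heq
          refine ⟨c, ⟨⟨?_, ?_⟩, ?_⟩, ?_⟩
          · show c.IsHomogeneous (j - 1)
            rcases eq_or_ne c 0 with rfl | hc0
            · exact isHomogeneous_zero _ _ _
            · have haV : a.IsHomogeneous j := hV ha
              rw [hca] at haV
              exact (homog_of_X_mul' hc0 haV).1
          · show mulL (X 0) c ∈ V
            simp only [mulL_apply]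
            rw [← hcb]; exact hb
          · show mulL (X 1) c ∈ V
            simp only [mulL_apply]
            rw [← hca]; exact ha
          · show mulL (X 0 * X 1) c = p
            simp only [mulL_apply]
            rw [← hpa', hca]; ring
      haveI : FiniteDimensional k (W.map (mulL (X 0 * X 1))) := by
        rw [hmapW]; infer_instance
      haveI : FiniteDimensional k W :=
        (Submodule.equivMapOfInjective _ (mulL_inj hxy0) W).symm.finiteDimensional
      have hWrank : Module.finrank k W = n := by
        have := finrank_map_mulL hxy0 W
        rw [hmapW, hinf] at this
        omega
      have hWne : W ≠ ⊥ := by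
        intro h; rw [h] at hWrank; simp at hWrank; omega
      have hWle : W ≤ homogeneousSubmodule (Fin 2) k (j-1) :=
        le_trans inf_le_left inf_le_left
      have hWleV0 : W ≤ V.comap (mulL (X 0)) := le_trans inf_le_left inf_le_right
      have hWleV1 : W ≤ V.comap (mulL (X 1)) := inf_le_right
      have hj1 : 1 ≤ j := by
        obtain ⟨w, hw, hw0⟩ := (Submodule.ne_bot_iff W).mp hWne
        have hwV : (X 0 : MvPolynomial (Fin 2) k) * w ∈ V := hWleV0 hw
        exact (homog_of_X_mul' hw0 (hV hwV)).2
      have hWsupLe : W.map (mulL (X 0)) ⊔ W.map (mulL (X 1)) ≤ V := by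
        apply sup_le <;> rw [Submodule.map_le_iff_le_comap]
        · exact hWleV0
        · exact hWleV1
      have htauW : Module.finrank k
          (W.map (mulL (X 0)) ⊔ W.map (mulL (X 1)) :
            Submodule k (MvPolynomial (Fin 2) k)) = n + 1 := by
        have h1 : Module.finrank k
            (W.map (mulL (X 0)) ⊔ W.map (mulL (X 1)) :
              Submodule k (MvPolynomial (Fin 2) k)) ≤ Module.finrank k V :=
          Submodule.finrank_mono hWsupLe
        have h2 := tau_lt W hWle hWne
        rw [hWrank] at h2
        rw [hVd] at h1
        omega
      have hWV : W.map (mulL (X 0)) ⊔ W.map (mulL (X 1)) = V := by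
        apply Submodule.eq_of_le_of_finrank_le hWsupLe
        rw [hVd, htauW]
      obtain ⟨f, hf, hWset⟩ := ih (j-1) W hn hWle hWrank (by rw [span_S_eq, htauW])
      have hidx : (j - 1) + 1 - n = j + 1 - (n + 1) := by omega
      rw [hidx] at hf
      refine ⟨f, hf, ?_⟩
      ext p
      simp only [SetLike.mem_coe, Set.mem_setOf_eq]
      constructor
      · intro hp
        rw [← hWV] at hp
        obtain ⟨p₁, hp₁, p₂, hp₂, rfl⟩ := Submodule.mem_sup.mp hp
        obtain ⟨w₁, hw₁, rfl⟩ := hp₁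
        obtain ⟨w₂, hw₂, rfl⟩ := hp₂
        have hw₁' : (w₁ : MvPolynomial (Fin 2) k) ∈
            {p | ∃ g ∈ homogeneousSubmodule (Fin 2) k (n - 1), p = f * g} := by
          rw [← hWset]; exact hw₁
        have hw₂' : (w₂ : MvPolynomial (Fin 2) k) ∈
            {p | ∃ g ∈ homogeneousSubmodule (Fin 2) k (n - 1), p = f * g} := by
          rw [← hWset]; exact hw₂
        obtain ⟨g₁, hg₁, rfl⟩ := hw₁'
        obtain ⟨g₂, hg₂, rfl⟩ := hw₂'
        refine ⟨X 0 * g₁ + X 1 * g₂, ?_, ?_⟩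
        · rw [mem_homogeneousSubmodule] at hg₁ hg₂ ⊢
          have h1 : ((X 0 : MvPolynomial (Fin 2) k) * g₁).IsHomogeneous (1 + (n - 1)) :=
            (isHomogeneous_X _ _).mul hg₁
          have h2 : ((X 1 : MvPolynomial (Fin 2) k) * g₂).IsHomogeneous (1 + (n - 1)) :=
            (isHomogeneous_X _ _).mul hg₂
          have hnn : 1 + (n - 1) = n + 1 - 1 := by omega
          rw [hnn] at h1 h2
          exact h1.add h2
        · simp only [mulL_apply]
          ring
      · rintro ⟨g, hg, rfl⟩
        rw [mem_homogeneousSubmodule] at hg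
        have hg' : g.IsHomogeneous ((n - 1) + 1) := by
          have : (n - 1) + 1 = n + 1 - 1 := by omega
          rw [this]; exact hg
        obtain ⟨a, b, ha, hb, rfl⟩ := split_homog hg'
        have hfa : f * a ∈ W := by
          have : f * a ∈ {p | ∃ g ∈ homogeneousSubmodule (Fin 2) k (n - 1), p = f * g} :=
            ⟨a, (mem_homogeneousSubmodule _ _).mpr ha, rfl⟩
          rw [← hWset] at this; exact this
        have hfb : f * b ∈ W := by
          have : f * b ∈ {p | ∃ g ∈ homogeneousSubmodule (Fin 2) k (n - 1), p = f * g} :=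
            ⟨b, (mem_homogeneousSubmodule _ _).mpr hb, rfl⟩
          rw [← hWset] at this; exact this
        have heq : f * (X 0 * a + X 1 * b) =
            mulL (X 0) (f * a) + mulL (X 1) (f * b) := by
          simp only [mulL_apply]
          ring
        rw [heq, ← hWV]
        exact Submodule.add_mem_sup (Submodule.mem_map_of_mem hfa)
          (Submodule.mem_map_of_mem hfb)

end TauAux

theorem tau_eq_one_principal (k : Type*) [Field k] (j d : ℕ) (hd : 1 ≤ d)
    (V : Submodule k (MvPolynomial (Fin 2) k))
    (hV : V ≤ homogeneousSubmodule (Fin 2) k j)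
    (hVd : Module.finrank k V = d)
    (htau : Module.finrank k
      (Submodule.span k {p : MvPolynomial (Fin 2) k |
        ∃ ℓ ∈ homogeneousSubmodule (Fin 2) k 1, ∃ g ∈ V, p = ℓ * g}) = d + 1) :
    ∃ f ∈ homogeneousSubmodule (Fin 2) k (j + 1 - d),
      (V : Set (MvPolynomial (Fin 2) k)) =
        {p | ∃ g ∈ homogeneousSubmodule (Fin 2) k (d - 1), p = f * g} := by
  exact TauAux.aux d j V hd hV hVd htau
end

section
/- Let R = k[x,y], V ⊆ R_j a subspace of dimension d with 1 ≤ d ≤ j, and define the ancestor ideal V̄ = Σ_{k=1}^{j} (V : R_k) ⊕ (V)_{≥j}, where V : R_k = {f ∈ R_{j-k} : R_k·f ⊆ V}. Then V̄ ∩ m^j = (V), where m = (x,y) and (V) is the ideal generated by V; moreover V̄ is the largest homogeneous ideal I of R with I ∩ m^j = (V). -/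
open MvPolynomial

namespace AncestorAux

variable {k : Type*} [Field k]

lemma deg2 (d : Fin 2 →₀ ℕ) : d.degree = d 0 + d 1 := by
  rw [Finsupp.degree, ← Fin.sum_univ_two (f := fun i => d i)]
  exact Finset.sum_subset (Finset.subset_univ _) (fun i _ hi => by
    simpa using Finsupp.notMem_support_iff.mp hi)

lemma degadd {σ : Type*} (u v : σ →₀ ℕ) :
    (u + v).degree = u.degree + v.degree := by
  simp only [Finsupp.degree_eq_weight_one, map_add]

lemma degree_of_mem_support {p : MvPolynomial (Fin 2) k} {n : ℕ}
    (hp : p ∈ homogeneousSubmodule (Fin 2) k n) {d} (hd : d ∈ p.support) :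
    d.degree = n := by
  rw [Finsupp.degree_eq_weight_one]
  exact hp (mem_support_iff.mp hd)

/-- Coefficients of elements of `m^j` live in degrees `≥ j`. -/
lemma coeff_mem_pow {j : ℕ} {p : MvPolynomial (Fin 2) k}
    (hp : p ∈ (Ideal.span {(X 0 : MvPolynomial (Fin 2) k), X 1}) ^ j) :
    ∀ d, coeff d p ≠ 0 → j ≤ d.degree := by
  induction j generalizing p with
  | zero => intro d _; exact Nat.zero_le _
  | succ n ih =>
    rw [pow_succ] at hp
    refine Submodule.mul_induction_on hp ?_ ?_
    · intro a ha b hb d hd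
      rw [coeff_mul] at hd
      obtain ⟨⟨u, v⟩, huv, hne⟩ := Finset.exists_ne_zero_of_sum_ne_zero hd
      have hu : n ≤ u.degree := ih ha u (left_ne_zero_of_mul hne)
      have hb0 : constantCoeff b = 0 := by
        obtain ⟨a1, a2, rfl⟩ := Ideal.mem_span_pair.mp hb
        simp
      have hvne : v ≠ 0 := by
        rintro rfl
        exact right_ne_zero_of_mul hne (by simpa [← constantCoeff_eq] using hb0)
      have hv : 1 ≤ v.degree := by
        rcases Nat.eq_zero_or_pos v.degree with h | h
        · exact absurd ((Finsupp.degree_eq_zero_iff v).mp h) hvne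
        · exact h
      have hd' : u + v = d := Finset.HasAntidiagonal.mem_antidiagonal.mp huv
      rw [← hd', degadd]
      omega
    · intro x y hx hy d hd
      rcases (by
        by_contra h
        push_neg at h
        simp [coeff_add, h.1, h.2] at hd : coeff d x ≠ 0 ∨ coeff d y ≠ 0) with h | h
      · exact hx d h
      · exact hy d h

lemma hc_eq_zero {j i : ℕ} {p : MvPolynomial (Fin 2) k}
    (hp : p ∈ (Ideal.span {(X 0 : MvPolynomial (Fin 2) k), X 1}) ^ j) (hij : i < j) :
    homogeneousComponent i p = 0 := by
  apply homogeneousComponent_eq_zero'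
  intro d hd
  have := coeff_mem_pow hp d (mem_support_iff.mp hd)
  omega

/-- A monomial of degree `≥ j` lies in `m^j`. -/
lemma monomial_mem_pow {j : ℕ} {d : Fin 2 →₀ ℕ} (c : k) (hd : j ≤ d.degree) :
    (monomial d c : MvPolynomial (Fin 2) k)
      ∈ (Ideal.span {(X 0 : MvPolynomial (Fin 2) k), X 1}) ^ j := by
  set a := min (d 0) j with ha
  set d2 : Fin 2 →₀ ℕ := Finsupp.single 0 a + Finsupp.single 1 (j - a) with hd2
  have hdeg : d.degree = d 0 + d 1 := deg2 d
  have hle : d2 ≤ d := by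
    intro i
    fin_cases i <;> simp [hd2, Finsupp.single_apply] <;> omega
  have hX : (X 0 : MvPolynomial (Fin 2) k) ^ a * X 1 ^ (j - a)
      ∈ (Ideal.span {(X 0 : MvPolynomial (Fin 2) k), X 1}) ^ j := by
    have h0 : (X 0 : MvPolynomial (Fin 2) k) ∈ Ideal.span {(X 0 : MvPolynomial (Fin 2) k), X 1} :=
      Ideal.subset_span (by simp)
    have h1 : (X 1 : MvPolynomial (Fin 2) k) ∈ Ideal.span {(X 0 : MvPolynomial (Fin 2) k), X 1} :=
      Ideal.subset_span (by simp)
    have hpow : (Ideal.span {(X 0 : MvPolynomial (Fin 2) k), X 1}) ^ j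
        = (Ideal.span {(X 0 : MvPolynomial (Fin 2) k), X 1}) ^ a
          * (Ideal.span {(X 0 : MvPolynomial (Fin 2) k), X 1}) ^ (j - a) := by
      rw [← pow_add]
      congr 1
      omega
    rw [hpow]
    exact Ideal.mul_mem_mul (Ideal.pow_mem_pow h0 a) (Ideal.pow_mem_pow h1 (j - a))
  have hmon : (X 0 : MvPolynomial (Fin 2) k) ^ a * X 1 ^ (j - a) = monomial d2 1 := by
    rw [X_pow_eq_monomial, X_pow_eq_monomial, monomial_mul, one_mul]
  have key : (monomial d c : MvPolynomial (Fin 2) k)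
      = monomial (d - d2) c * monomial d2 1 := by
    rw [monomial_mul, mul_one, tsub_add_cancel_of_le hle]
  rw [key, ← hmon]
  exact Ideal.mul_mem_left _ _ hX

/-- A homogeneous polynomial of degree `≥ j` lies in `m^j`. -/
lemma homog_mem_pow {j n : ℕ} {p : MvPolynomial (Fin 2) k}
    (hp : p ∈ homogeneousSubmodule (Fin 2) k n) (hj : j ≤ n) :
    p ∈ (Ideal.span {(X 0 : MvPolynomial (Fin 2) k), X 1}) ^ j := by
  rw [← support_sum_monomial_coeff p]
  refine Ideal.sum_mem _ fun d hd => ?_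
  exact monomial_mem_pow _ (by rw [degree_of_mem_support hp hd]; exact hj)

/-- Splitting lemma: if `b * f ∈ V` for all homogeneous `b` of degree `m`, and `g` is
homogeneous of degree `n ≥ m`, then `g * f ∈ (V)`. -/
lemma mul_mem_spanV {V : Submodule k (MvPolynomial (Fin 2) k)} {f : MvPolynomial (Fin 2) k}
    {m : ℕ} (hmul : ∀ g ∈ homogeneousSubmodule (Fin 2) k m, g * f ∈ V)
    {g : MvPolynomial (Fin 2) k} {n : ℕ}
    (hg : g ∈ homogeneousSubmodule (Fin 2) k n) (hmn : m ≤ n) :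
    g * f ∈ Ideal.span (V : Set (MvPolynomial (Fin 2) k)) := by
  rw [← support_sum_monomial_coeff g, Finset.sum_mul]
  refine Ideal.sum_mem _ fun d hd => ?_
  have hdeg : d.degree = n := degree_of_mem_support hg hd
  have hdeg2 : d.degree = d 0 + d 1 := deg2 d
  set a := min (d 0) m with ha
  set d2 : Fin 2 →₀ ℕ := Finsupp.single 0 a + Finsupp.single 1 (m - a) with hd2
  have hle : d2 ≤ d := by
    intro i
    fin_cases i <;> simp [hd2, Finsupp.single_apply] <;> omega
  have hd2deg : d2.degree = m := by
    rw [hd2, degadd, deg2, deg2]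
    simp [Finsupp.single_apply]
    omega
  have hd2mem : (monomial d2 1 : MvPolynomial (Fin 2) k)
      ∈ homogeneousSubmodule (Fin 2) k m :=
    isHomogeneous_monomial _ hd2deg
  have key : (monomial d (coeff d g) : MvPolynomial (Fin 2) k)
      = monomial (d - d2) (coeff d g) * monomial d2 1 := by
    rw [monomial_mul, mul_one, tsub_add_cancel_of_le hle]
  rw [key, mul_assoc]
  exact Ideal.mul_mem_left _ _ (Ideal.subset_span (hmul _ hd2mem))

/-- The degree-`j` homogeneous component of any element of `(V)` lies in `V`. -/
lemma hc_spanV {V : Submodule k (MvPolynomial (Fin 2) k)} {j : ℕ}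
    (hV : V ≤ homogeneousSubmodule (Fin 2) k j)
    {p : MvPolynomial (Fin 2) k} (hp : p ∈ Ideal.span (V : Set (MvPolynomial (Fin 2) k))) :
    homogeneousComponent j p ∈ V := by
  have key : ∀ r : MvPolynomial (Fin 2) k, homogeneousComponent j (r * p) ∈ V := by
    refine Submodule.span_induction
      (p := fun x _ => ∀ r : MvPolynomial (Fin 2) k, homogeneousComponent j (r * x) ∈ V)
      ?_ ?_ ?_ ?_ hp
    · intro v hv r
      rw [← sum_homogeneousComponent r, Finset.sum_mul, map_sum]
      refine Submodule.sum_mem _ fun u _ => ?_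
      have hmem : homogeneousComponent u r * v ∈ homogeneousSubmodule (Fin 2) k (u + j) :=
        (homogeneousComponent_isHomogeneous u r).mul (hV hv)
      rw [homogeneousComponent_of_mem hmem]
      split_ifs with h
      · have hu : u = 0 := by omega
        subst hu
        rw [homogeneousComponent_zero, ← smul_eq_C_mul]
        exact V.smul_mem _ hv
      · exact V.zero_mem
    · intro r; simp
    · intro x y _ _ hxr hyr r
      rw [mul_add, map_add]
      exact V.add_mem (hxr r) (hyr r)
    · intro a x _ hax r
      rw [smul_eq_mul, ← mul_assoc]
      exact hax (r * a)
  simpa using key 1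

end AncestorAux

open AncestorAux

/-- The ancestor ideal `V̄` (generated by the colon spaces `V : R_k` together with `V`)
satisfies `V̄ ∩ m^j = (V)` and is the largest homogeneous ideal with this property. -/
theorem ancestor_ideal_property (k : Type*) [Field k] (j d : ℕ)
    (hd1 : 1 ≤ d) (hdj : d ≤ j)
    (V : Submodule k (MvPolynomial (Fin 2) k))
    (hV : V ≤ homogeneousSubmodule (Fin 2) k j)
    (hVd : Module.finrank k V = d) :
    Ideal.span {f : MvPolynomial (Fin 2) k |
        ∃ m : ℕ, m ≤ j ∧ f ∈ homogeneousSubmodule (Fin 2) k (j - m) ∧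
          ∀ g ∈ homogeneousSubmodule (Fin 2) k m, g * f ∈ V}
      ⊓ (Ideal.span {(X 0 : MvPolynomial (Fin 2) k), X 1}) ^ j
      = Ideal.span (V : Set (MvPolynomial (Fin 2) k)) ∧
    ∀ I : Ideal (MvPolynomial (Fin 2) k),
      (∀ p ∈ I, ∀ i : ℕ, homogeneousComponent i p ∈ I) →
      I ⊓ (Ideal.span {(X 0 : MvPolynomial (Fin 2) k), X 1}) ^ j
        = Ideal.span (V : Set (MvPolynomial (Fin 2) k)) →
      I ≤ Ideal.span {f : MvPolynomial (Fin 2) k |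
        ∃ m : ℕ, m ≤ j ∧ f ∈ homogeneousSubmodule (Fin 2) k (j - m) ∧
          ∀ g ∈ homogeneousSubmodule (Fin 2) k m, g * f ∈ V} := by
  set S : Set (MvPolynomial (Fin 2) k) := {f : MvPolynomial (Fin 2) k |
        ∃ m : ℕ, m ≤ j ∧ f ∈ homogeneousSubmodule (Fin 2) k (j - m) ∧
          ∀ g ∈ homogeneousSubmodule (Fin 2) k m, g * f ∈ V} with hS
  -- V ⊆ S
  have hVS : (V : Set (MvPolynomial (Fin 2) k)) ⊆ S := by
    intro v hv
    refine ⟨0, Nat.zero_le _, by simpa using hV hv, ?_⟩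
    intro g hg
    have hg0 : g = C (coeff 0 g) := by
      have h1 : homogeneousComponent 0 g = g := by
        rw [homogeneousComponent_of_mem (n := 0) hg, if_pos rfl]
      conv_lhs => rw [← h1, homogeneousComponent_zero]
    rw [hg0, ← smul_eq_C_mul]
    exact V.smul_mem _ hv
  -- homogeneous components of degree ≥ j of elements of span S lie in span V
  have hSV : ∀ p ∈ Ideal.span S, ∀ i, j ≤ i →
      homogeneousComponent i p ∈ Ideal.span (V : Set (MvPolynomial (Fin 2) k)) := by
    intro p hp
    have key : ∀ r : MvPolynomial (Fin 2) k, ∀ i, j ≤ i →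
        homogeneousComponent i (r * p) ∈ Ideal.span (V : Set (MvPolynomial (Fin 2) k)) := by
      refine Submodule.span_induction
        (p := fun x _ => ∀ r : MvPolynomial (Fin 2) k, ∀ i, j ≤ i →
          homogeneousComponent i (r * x) ∈ Ideal.span (V : Set (MvPolynomial (Fin 2) k)))
        ?_ ?_ ?_ ?_ hp
      · rintro f ⟨m, hm, hf, hmul⟩ r i hi
        rw [← sum_homogeneousComponent r, Finset.sum_mul, map_sum]
        refine Submodule.sum_mem _ fun u _ => ?_
        have hmem : homogeneousComponent u r * f
            ∈ homogeneousSubmodule (Fin 2) k (u + (j - m)) :=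
          (homogeneousComponent_isHomogeneous u r).mul hf
        rw [homogeneousComponent_of_mem hmem]
        split_ifs with h
        · exact mul_mem_spanV hmul (homogeneousComponent_mem u r) (by omega)
        · exact Submodule.zero_mem _
      · intro r i hi; simp
      · intro x y _ _ hxr hyr r i hi
        rw [mul_add, map_add]
        exact Submodule.add_mem _ (hxr r i hi) (hyr r i hi)
      · intro a x _ hax r i hi
        rw [smul_eq_mul, ← mul_assoc]
        exact hax (r * a) i hi
    intro i hi
    simpa using key 1 i hi
  constructor
  · apply le_antisymm
    · rintro p ⟨hpS, hpM⟩
      rw [← sum_homogeneousComponent p]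
      refine Submodule.sum_mem _ fun i _ => ?_
      by_cases h : i < j
      · rw [hc_eq_zero hpM h]; exact Submodule.zero_mem _
      · exact hSV p hpS i (le_of_not_gt h)
    · refine le_inf (Ideal.span_mono hVS) ?_
      rw [Ideal.span_le]
      intro v hv
      exact homog_mem_pow (hV hv) le_rfl
  · intro I hIhom hIeq p hp
    rw [← sum_homogeneousComponent p]
    refine Submodule.sum_mem _ fun e _ => ?_
    have hqI : homogeneousComponent e p ∈ I := hIhom p hp e
    have hqhom : homogeneousComponent e p ∈ homogeneousSubmodule (Fin 2) k e :=
      homogeneousComponent_mem e p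
    by_cases h : e < j
    · -- the component belongs to the colon set S with m = j - e
      refine Ideal.subset_span ?_
      refine ⟨j - e, Nat.sub_le _ _, by rwa [Nat.sub_sub_self (le_of_lt h)], ?_⟩
      intro g hg
      have hgq : g * homogeneousComponent e p ∈ homogeneousSubmodule (Fin 2) k j := by
        have := ((mem_homogeneousSubmodule _ _).mp hg).mul
          ((mem_homogeneousSubmodule _ _).mp hqhom)
        rwa [Nat.sub_add_cancel (le_of_lt h)] at this
      have hmem : g * homogeneousComponent e p ∈ I ⊓
          (Ideal.span {(X 0 : MvPolynomial (Fin 2) k), X 1}) ^ j :=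
        ⟨Ideal.mul_mem_left _ _ hqI, homog_mem_pow hgq le_rfl⟩
      rw [hIeq] at hmem
      have := hc_spanV hV hmem
      rwa [homogeneousComponent_of_mem hgq, if_pos rfl] at this
    · -- degree ≥ j: component lies in I ⊓ m^j = span V ⊆ span S
      have hmem : homogeneousComponent e p ∈ I ⊓
          (Ideal.span {(X 0 : MvPolynomial (Fin 2) k), X 1}) ^ j :=
        ⟨hqI, homog_mem_pow hqhom (le_of_not_gt h)⟩
      rw [hIeq] at hmem
      exact Ideal.span_mono hVS hmem
end

section
/- Let R = k[x,y] and V ⊆ R_j a subspace of dimension d. If dim_k(R_1·V) = d+1 (i.e., τ(V) = 1 with d ≥ 1), equivalently V = f·R_{d-1} for some form f of degree j−d+1, then dim_k(R_i · V) = d + i for all i ≥ 0, where R_i·V is the span of products of degree-i forms with elements of V. In particular the Hilbert function of R/(V) in degree j+i is (j+i+1) − (d+i) = j+1−d for all i ≥ 0. -/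
open MvPolynomial

namespace TauOne

variable {k : Type*} [Field k]

noncomputable abbrev mX (k : Type*) [Field k] (s : Fin 2) :
    MvPolynomial (Fin 2) k →ₗ[k] MvPolynomial (Fin 2) k :=
  LinearMap.mulLeft k (X s)

lemma mX_inj (s : Fin 2) : Function.Injective (mX k s) :=
  fun _ _ h => mul_left_cancel₀ (X_ne_zero s) h

/-- the step operator `W ↦ x W + y W`. -/
noncomputable def stp (W : Submodule k (MvPolynomial (Fin 2) k)) :
    Submodule k (MvPolynomial (Fin 2) k) :=
  W.map (mX k 0) ⊔ W.map (mX k 1)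

lemma finrank_map_mX (s : Fin 2) (W : Submodule k (MvPolynomial (Fin 2) k)) :
    Module.finrank k (W.map (mX k s)) = Module.finrank k W :=
  (LinearEquiv.finrank_eq (Submodule.equivMapOfInjective _ (mX_inj s) W)).symm

lemma prime_X0 : Prime (X 0 : MvPolynomial (Fin 2) k) := by
  rw [← MulEquiv.prime_iff (MvPolynomial.finSuccEquiv k 1).toRingEquiv.toMulEquiv]
  have h : (MvPolynomial.finSuccEquiv k 1).toRingEquiv.toMulEquiv (X 0) = Polynomial.X := by
    show (MvPolynomial.finSuccEquiv k 1) (X 0) = Polynomial.X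
    exact MvPolynomial.finSuccEquiv_X_zero
  rw [h]
  exact Polynomial.prime_X

lemma X0_not_dvd_X1 : ¬ (X 0 : MvPolynomial (Fin 2) k) ∣ X 1 := by
  rintro ⟨q, hq⟩
  have := congrArg (MvPolynomial.eval (fun s : Fin 2 => if s = 1 then (1:k) else 0)) hq
  simp at this

lemma totalDegree_X_mul {p : MvPolynomial (Fin 2) k} (hp : p ≠ 0) (s : Fin 2) :
    p.totalDegree + 1 ≤ (X s * p).totalDegree := by
  obtain ⟨d, hd, hsup⟩ := p.support.exists_mem_eq_sup (support_nonempty.2 hp)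
    (fun m => m.sum fun _ e => e)
  have hmem : Finsupp.single s 1 + d ∈ (X s * p).support := by
    rw [support_X_mul]
    exact Finset.mem_map.2 ⟨d, hd, rfl⟩
  have := le_totalDegree hmem
  rw [Finsupp.sum_add_index' (fun _ => rfl) (fun _ _ _ => rfl), Finsupp.sum_single_index rfl]
    at this
  rw [MvPolynomial.totalDegree, hsup]
  omega

lemma le_totalDegree_X0_pow_mul {g : MvPolynomial (Fin 2) k} (hg : g ≠ 0) (m : ℕ) :
    m ≤ ((X 0 : MvPolynomial (Fin 2) k) ^ m * g).totalDegree := by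
  induction m with
  | zero => exact Nat.zero_le _
  | succ n ih =>
    have hne : (X 0 : MvPolynomial (Fin 2) k) ^ n * g ≠ 0 :=
      mul_ne_zero (pow_ne_zero _ (X_ne_zero 0)) hg
    have h1 := totalDegree_X_mul hne 0
    have : (X 0 : MvPolynomial (Fin 2) k) ^ (n+1) * g = X 0 * (X 0 ^ n * g) := by ring
    rw [this]
    omega

/-- descent: if `y W ⊆ x W` then `W = 0`. -/
lemma descent {W : Submodule k (MvPolynomial (Fin 2) k)}
    (h : W.map (mX k 1) ≤ W.map (mX k 0)) : W = ⊥ := by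
  rw [eq_bot_iff]
  intro f hf
  simp only [Submodule.mem_bot]
  by_contra hf0
  -- iterate
  have key : ∀ m : ℕ, ∃ g ∈ W, (X 1 : MvPolynomial (Fin 2) k) ^ m * f = X 0 ^ m * g := by
    intro m
    induction m with
    | zero => exact ⟨f, hf, by simp⟩
    | succ n ih =>
      obtain ⟨g, hg, hgeq⟩ := ih
      obtain ⟨g', hg', hg'eq⟩ := h (Submodule.mem_map_of_mem hg)
      -- hg'eq : mX k 0 g' = mX k 1 g, i.e. X 0 * g' = X 1 * g
      refine ⟨g', hg', ?_⟩
      have hx : (X 0 : MvPolynomial (Fin 2) k) * g' = X 1 * g := hg'eq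
      calc (X 1 : MvPolynomial (Fin 2) k) ^ (n+1) * f = X 1 * (X 1 ^ n * f) := by ring
        _ = X 1 * (X 0 ^ n * g) := by rw [hgeq]
        _ = X 0 ^ n * (X 1 * g) := by ring
        _ = X 0 ^ n * (X 0 * g') := by rw [hx]
        _ = X 0 ^ (n+1) * g' := by ring
  set m := f.totalDegree + 1 with hm
  obtain ⟨g, _, hgeq⟩ := key m
  have hdvd : (X 0 : MvPolynomial (Fin 2) k) ^ m ∣ X 1 ^ m * f := ⟨g, hgeq⟩
  have hnd : ¬ (X 0 : MvPolynomial (Fin 2) k) ∣ X 1 ^ m := fun hd =>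
    X0_not_dvd_X1 (prime_X0.dvd_of_dvd_pow hd)
  have hdf : (X 0 : MvPolynomial (Fin 2) k) ^ m ∣ f :=
    prime_X0.pow_dvd_of_dvd_mul_left m hnd hdvd
  obtain ⟨q, hq⟩ := hdf
  have hq0 : q ≠ 0 := fun h0 => hf0 (by simp [hq, h0])
  have := le_totalDegree_X0_pow_mul hq0 m
  rw [← hq] at this
  omega



/-- The span of products `R_i · V`. -/
noncomputable def SV (V : Submodule k (MvPolynomial (Fin 2) k)) (i : ℕ) :
    Submodule k (MvPolynomial (Fin 2) k) :=
  Submodule.span k {p : MvPolynomial (Fin 2) k |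
    ∃ g ∈ homogeneousSubmodule (Fin 2) k i, ∃ f ∈ V, p = g * f}

variable (V : Submodule k (MvPolynomial (Fin 2) k))

lemma SV_zero : SV V 0 = V := by
  apply le_antisymm
  · rw [SV, Submodule.span_le]
    rintro p ⟨g, hg, f, hf, rfl⟩
    rw [mem_homogeneousSubmodule] at hg
    have hgC : g = C (MvPolynomial.coeff 0 g) := by
      apply MvPolynomial.ext
      intro d
      rw [coeff_C]
      by_cases hd : d = 0
      · subst hd; simp
      · rw [if_neg (fun h => hd h.symm)]
        by_contra hc
        have := hg hc
        rw [show (Finsupp.weight 1 : (Fin 2 →₀ ℕ) →+ ℕ) = Finsupp.weight (fun _ => 1) from rfl,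
          ← Finsupp.degree_eq_weight_one, Finsupp.degree_eq_zero_iff] at this
        exact hd this
    have hgf : g * f = (MvPolynomial.coeff 0 g) • f := by
      conv_lhs => rw [hgC]
      rw [C_mul']
    rw [SetLike.mem_coe, hgf]
    exact Submodule.smul_mem V _ hf
  · intro f hf
    exact Submodule.subset_span ⟨1, isHomogeneous_one _ _, f, hf, (one_mul f).symm⟩

lemma SV_le_H {j : ℕ} (hV : V ≤ homogeneousSubmodule (Fin 2) k j) (i : ℕ) :
    SV V i ≤ homogeneousSubmodule (Fin 2) k (j + i) := by
  rw [SV, Submodule.span_le]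
  rintro p ⟨g, hg, f, hf, rfl⟩
  rw [mem_homogeneousSubmodule] at hg
  rw [SetLike.mem_coe, mem_homogeneousSubmodule]
  have hfj : f.IsHomogeneous j := hV hf
  simpa [add_comm] using hg.mul hfj

lemma findim_of_le_H {n : ℕ} {W : Submodule k (MvPolynomial (Fin 2) k)}
    (h : W ≤ homogeneousSubmodule (Fin 2) k n) : FiniteDimensional k W := by
  have hle : W ≤ restrictTotalDegree (Fin 2) k n := by
    intro p hp
    rw [mem_restrictTotalDegree]
    exact ((mem_homogeneousSubmodule _ _).1 (h hp)).totalDegree_le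
  exact Submodule.finiteDimensional_of_le hle

lemma deg_add (a b : Fin 2 →₀ ℕ) : (a + b).degree = a.degree + b.degree := by
  simp [Finsupp.degree_eq_weight_one, map_add]

lemma deg_single (s : Fin 2) : (Finsupp.single s 1 : Fin 2 →₀ ℕ).degree = 1 := by
  exact Finsupp.degree_single s 1

lemma map_le_stp (W : Submodule k (MvPolynomial (Fin 2) k)) (s : Fin 2) :
    W.map (mX k s) ≤ stp W := by
  fin_cases s
  · exact le_sup_left
  · exact le_sup_right

lemma map_mX_SV_le (i : ℕ) (s : Fin 2) : (SV V i).map (mX k s) ≤ SV V (i + 1) := by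
  rw [SV, Submodule.map_span, Submodule.span_le]
  rintro p ⟨q, ⟨g, hg, f, hf, rfl⟩, rfl⟩
  rw [mem_homogeneousSubmodule] at hg
  refine Submodule.subset_span ⟨X s * g, ?_, f, hf, ?_⟩
  · rw [mem_homogeneousSubmodule]
    have := (isHomogeneous_X k s).mul hg
    rwa [add_comm 1 i] at this
  · rw [LinearMap.mulLeft_apply]; ring

lemma SV_succ (i : ℕ) : SV V (i + 1) = stp (SV V i) := by
  apply le_antisymm
  · rw [SV, Submodule.span_le]
    rintro p ⟨g, hg, f, hf, rfl⟩
    rw [mem_homogeneousSubmodule] at hg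
    -- expand g as a sum of monomials
    rw [g.as_sum, Finset.sum_mul]
    apply Submodule.sum_mem
    intro u hu
    have hcu : MvPolynomial.coeff u g ≠ 0 := mem_support_iff.1 hu
    have hdeg : Finsupp.degree u = i + 1 := by
      have := hg hcu
      rwa [show (Finsupp.weight 1 : (Fin 2 →₀ ℕ) →+ ℕ) = Finsupp.weight (fun _ => 1) from rfl,
        ← Finsupp.degree_eq_weight_one] at this
    -- find a variable dividing u
    have hune : u ≠ 0 := by
      intro h0
      rw [h0] at hdeg
      simp at hdeg
    obtain ⟨s, hs⟩ : ∃ s : Fin 2, u s ≠ 0 := by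
      by_contra hall
      push_neg at hall
      exact hune (Finsupp.ext fun a => hall a)
    have hle : Finsupp.single s 1 ≤ u := Finsupp.single_le_iff.2 (Nat.one_le_iff_ne_zero.2 hs)
    set u' := u - Finsupp.single s 1 with hu'
    have husum : Finsupp.single s 1 + u' = u := by
      rw [hu', add_comm]
      exact tsub_add_cancel_of_le hle
    have hmono : monomial u (MvPolynomial.coeff u g) =
        X s * monomial u' (MvPolynomial.coeff u g) := by
      rw [← husum, monomial_single_add, pow_one]
    have hdeg' : Finsupp.degree u' = i := by
      have := congrArg Finsupp.degree husum
      rw [deg_add, deg_single] at this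
      omega
    have hmem : monomial u' (MvPolynomial.coeff u g) * f ∈ SV V i :=
      Submodule.subset_span ⟨monomial u' (MvPolynomial.coeff u g),
        isHomogeneous_monomial _ hdeg', f, hf, rfl⟩
    have : monomial u (MvPolynomial.coeff u g) * f
        = mX k s (monomial u' (MvPolynomial.coeff u g) * f) := by
      rw [LinearMap.mulLeft_apply, hmono]; ring
    rw [this]
    have hm : mX k s (monomial u' (MvPolynomial.coeff u g) * f) ∈ (SV V i).map (mX k s) :=
      Submodule.mem_map_of_mem hmem
    exact SetLike.mem_coe.2 (map_le_stp (SV V i) s hm)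
  · rw [stp, sup_le_iff]
    exact ⟨map_mX_SV_le V i 0, map_mX_SV_le V i 1⟩

lemma stp_lower {W : Submodule k (MvPolynomial (Fin 2) k)}
    [FiniteDimensional k (stp W)] (hW : W ≠ ⊥) :
    Module.finrank k W + 1 ≤ Module.finrank k (stp W) := by
  have h0 : W.map (mX k 0) ≤ stp W := le_sup_left
  have hlt : W.map (mX k 0) < stp W := by
    refine lt_of_le_of_ne h0 (fun he => hW (descent ?_))
    rw [he]
    exact le_sup_right
  have := Submodule.finrank_lt_finrank_of_lt hlt
  rw [finrank_map_mX] at this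
  omega

lemma stp_upper (B : Submodule k (MvPolynomial (Fin 2) k))
    [FiniteDimensional k (stp (stp B))] :
    Module.finrank k (stp (stp B)) + Module.finrank k B
      ≤ 2 * Module.finrank k (stp B) := by
  have hsub0 : (stp B).map (mX k 0) ≤ stp (stp B) := le_sup_left
  have hsub1 : (stp B).map (mX k 1) ≤ stp (stp B) := le_sup_right
  haveI f0 : FiniteDimensional k ((stp B).map (mX k 0)) :=
    Submodule.finiteDimensional_of_le hsub0
  haveI f1 : FiniteDimensional k ((stp B).map (mX k 1)) :=
    Submodule.finiteDimensional_of_le hsub1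
  have hsum := Submodule.finrank_sup_add_finrank_inf_eq
    ((stp B).map (mX k 0)) ((stp B).map (mX k 1))
  have hcomm : (mX k 0).comp (mX k 1) = (mX k 1).comp (mX k 0) := by
    rw [← LinearMap.mulLeft_mul, ← LinearMap.mulLeft_mul, mul_comm]
  have hC : (B.map (mX k 1)).map (mX k 0)
      ≤ (stp B).map (mX k 0) ⊓ (stp B).map (mX k 1) := by
    refine le_inf ?_ ?_
    · exact Submodule.map_mono (le_sup_right : B.map (mX k 1) ≤ stp B)
    · rw [← Submodule.map_comp, hcomm, Submodule.map_comp]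
      exact Submodule.map_mono (le_sup_left : B.map (mX k 0) ≤ stp B)
  have hinf : ((stp B).map (mX k 0) ⊓ (stp B).map (mX k 1) :
      Submodule k (MvPolynomial (Fin 2) k)) ≤ (stp B).map (mX k 0) := inf_le_left
  haveI finf : FiniteDimensional k ((stp B).map (mX k 0) ⊓ (stp B).map (mX k 1) :
      Submodule k (MvPolynomial (Fin 2) k)) :=
    Submodule.finiteDimensional_of_le hinf
  have hBle : Module.finrank k B
      ≤ Module.finrank k ((stp B).map (mX k 0) ⊓ (stp B).map (mX k 1) :
        Submodule k (MvPolynomial (Fin 2) k)) := by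
    have := Submodule.finrank_mono hC
    rwa [finrank_map_mX, finrank_map_mX] at this
  have h1 : Module.finrank k ((stp B).map (mX k 0)) = Module.finrank k (stp B) :=
    finrank_map_mX _ _
  have h2 : Module.finrank k ((stp B).map (mX k 1)) = Module.finrank k (stp B) :=
    finrank_map_mX _ _
  have hstp : Module.finrank k (stp (stp B)) =
      Module.finrank k ((stp B).map (mX k 0) ⊔ (stp B).map (mX k 1) :
        Submodule k (MvPolynomial (Fin 2) k)) := rfl
  rw [hstp]
  omega

theorem main {j d : ℕ} (_hd : 1 ≤ d)
    (hV : V ≤ homogeneousSubmodule (Fin 2) k j)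
    (hVd : Module.finrank k V = d)
    (htau : Module.finrank k (SV V 1) = d + 1) :
    ∀ i : ℕ, Module.finrank k (SV V i) = d + i := by
  have F : ∀ i : ℕ, FiniteDimensional k (SV V i) := fun i => findim_of_le_H (SV_le_H V hV i)
  have key : ∀ i : ℕ, Module.finrank k (SV V i) = d + i ∧
      Module.finrank k (SV V (i + 1)) = d + (i + 1) := by
    intro i
    induction i with
    | zero =>
      refine ⟨?_, by simpa using htau⟩
      rw [SV_zero]
      simpa using hVd
    | succ n ih =>
      refine ⟨ih.2, ?_⟩
      show Module.finrank k (SV V (n + 2)) = d + (n + 2)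
      have e0 : stp (SV V n) = SV V (n + 1) := (SV_succ V n).symm
      have e1 : stp (SV V (n + 1)) = SV V (n + 2) := (SV_succ V (n + 1)).symm
      have e2 : stp (stp (SV V n)) = SV V (n + 2) := by rw [e0, e1]
      haveI : FiniteDimensional k (stp (SV V (n + 1))) := e1 ▸ F (n + 2)
      haveI : FiniteDimensional k (stp (stp (SV V n))) := e2 ▸ F (n + 2)
      have hne : SV V (n + 1) ≠ ⊥ := by
        intro hbot
        have : Module.finrank k (SV V (n + 1)) = 0 := by
          rw [hbot]; exact finrank_bot k _
        omega
      have hlow := stp_lower (W := SV V (n + 1)) hne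
      rw [e1] at hlow
      have hup := stp_upper (SV V n)
      rw [e2, e0] at hup
      have h1 := ih.1
      have h2 := ih.2
      omega
  exact fun i => (key i).1

end TauOne

/-- If `τ(V) = 1`, i.e. `dim R_1·V = d + 1`, then `dim (R_i·V) = d + i` for all `i`,
and the Hilbert function of `R/(V)` in degree `j+i` is the constant `j+1-d`. -/
theorem tau_one_hilbert (k : Type*) [Field k] (j d : ℕ) (hd : 1 ≤ d)
    (V : Submodule k (MvPolynomial (Fin 2) k))
    (hV : V ≤ homogeneousSubmodule (Fin 2) k j)
    (hVd : Module.finrank k V = d)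
    (htau : Module.finrank k
      (Submodule.span k {p : MvPolynomial (Fin 2) k |
        ∃ g ∈ homogeneousSubmodule (Fin 2) k 1, ∃ f ∈ V, p = g * f}) = d + 1) :
    ∀ i : ℕ,
      Module.finrank k
        (Submodule.span k {p : MvPolynomial (Fin 2) k |
          ∃ g ∈ homogeneousSubmodule (Fin 2) k i, ∃ f ∈ V, p = g * f}) = d + i ∧
      (j + i + 1) - (d + i) = j + 1 - d := by
  intro i
  refine ⟨?_, by omega⟩
  exact TauOne.main V hd hV hVd htau i
end
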